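/- arXiv:2411.13233 — 2 statements merged into one kernel-verified Lean document; each statement's English description precedes it below -/
import Mathlib

section
/- For any class [θ]_n ∈ R_B(f^n; x₀, n(ω)), the length l of its [f^ω]-orbit divides its depth d. (More precisely, if [θ]_n is reducible to m, then [f^ω]^m([θ]_n) = [θ]_n, so l divides m; applying this to m = d gives l | d.) -/
open unitInterval

/-- The homotopy lifting property with respect to all spaces (Hurewicz fibration). -/
def IsHurewiczFibration {E B : Type} [TopologicalSpace E] [TopologicalSpace B]
    (p : C(E, B)) : Prop :=
  ∀ (X : Type) [TopologicalSpace X] (H : C(X × I, B)) (h₀ : C(X, E)),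
    (∀ x, H (x, 0) = p (h₀ x)) →
      ∃ H' : C(X × I, E), (∀ x, H' (x, 0) = h₀ x) ∧ ∀ z, p (H' z) = H z

variable {E B : Type} [TopologicalSpace E] [TopologicalSpace B]

/-- Loops at `x₀` lying in the fiber of `p` through `x₀`; they represent elements of
`π₁(Y, x₀)` where `Y = p⁻¹(p x₀)`. -/
def FiberLoop (p : C(E, B)) (x₀ : E) : Type :=
  {θ : Path x₀ x₀ // ∀ t, p (θ t) = p x₀}

/-- Two fiber loops `θ`, `θ'` are Reidemeister related over `B` (for the fiber map `g` and
base path `w` from `x₀` to `g x₀`) if there are a loop `c` in `E` at `x₀` and a lift `H` of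
the homotopy `(t,s) ↦ p (c t)` with `H(t,0) = c(t)`, `H(0,s) = (θ∗w)(s)`, `H(t,1) = g(c(t))`
and `H(1,s) = (θ'∗w)(s)`. -/
def ReidemeisterRelB (p : C(E, B)) (g : C(E, E)) {x₀ : E} (w : Path x₀ (g x₀)) :
    FiberLoop p x₀ → FiberLoop p x₀ → Prop := fun θ θ' =>
  ∃ (c : Path x₀ x₀) (H : C(I × I, E)),
    (∀ t, H (t, 0) = c t) ∧
    (∀ s, H (0, s) = (θ.1.trans w) s) ∧
    (∀ t, H (t, 1) = g (c t)) ∧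
    (∀ s, H (1, s) = (θ'.1.trans w) s) ∧
    (∀ t s, p (H (t, s)) = p (c t))

/-- The set of Reidemeister classes over `B`. -/
def ReidemeisterSetB (p : C(E, B)) (g : C(E, E)) {x₀ : E} (w : Path x₀ (g x₀)) : Type :=
  Quot (ReidemeisterRelB p g w)

/-- The `n`-th iterate of a continuous self-map, as a continuous map. -/
def iterC (f : C(E, E)) (n : ℕ) : C(E, E) := ⟨(⇑f)^[n], f.continuous.iterate n⟩

/-- The path `n(ω) = ω ∗ f(ω) ∗ ⋯ ∗ f^{n−1}(ω)` from `x₀` to `f^n(x₀)`. -/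
noncomputable def nPath (f : C(E, E)) {x₀ : E} (ω : Path x₀ (f x₀)) : (n : ℕ) → Path x₀ ((⇑f)^[n] x₀)
  | 0 => Path.refl x₀
  | 1 => ω
  | (n + 2) => (nPath f ω (n + 1)).trans (ω.map (f.continuous.iterate (n + 1)))

theorem fiber_iterate {p : C(E, B)} {f : C(E, E)} (hf : ∀ x, p (f x) = p x) :
    ∀ (k : ℕ) (x : E), p ((⇑f)^[k] x) = p x
  | 0, _ => rfl
  | (k + 1), x => by
      rw [Function.iterate_succ_apply, fiber_iterate hf k (f x), hf x]

theorem fiber_trans {p : C(E, B)} {x₀ a b c : E} {γ : Path a b} {δ : Path b c}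
    (hγ : ∀ t, p (γ t) = p x₀) (hδ : ∀ t, p (δ t) = p x₀) :
    ∀ t, p ((γ.trans δ) t) = p x₀ := by
  intro t
  rw [Path.trans_apply]
  split_ifs <;> first | exact hγ _ | exact hδ _

theorem fiber_symm {p : C(E, B)} {x₀ a b : E} {γ : Path a b}
    (hγ : ∀ t, p (γ t) = p x₀) : ∀ t, p (γ.symm t) = p x₀ := fun _ => hγ _

theorem fiber_map {p : C(E, B)} {f : C(E, E)} (hf : ∀ x, p (f x) = p x) {x₀ a b : E}
    {γ : Path a b} (hγ : ∀ t, p (γ t) = p x₀) (k : ℕ) :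
    ∀ t, p ((γ.map (f.continuous.iterate k)) t) = p x₀ := fun t => by
  show p ((⇑f)^[k] (γ t)) = p x₀
  rw [fiber_iterate hf k, hγ]

theorem fiber_nPath {p : C(E, B)} {f : C(E, E)} (hf : ∀ x, p (f x) = p x) {x₀ : E}
    {ω : Path x₀ (f x₀)} (hω : ∀ t, p (ω t) = p x₀) :
    ∀ (n : ℕ) (t : I), p (nPath f ω n t) = p x₀
  | 0, _ => rfl
  | 1, t => hω t
  | (n + 2), t => by
      simp only [nPath]
      exact fiber_trans (fiber_nPath hf hω (n + 1)) (fiber_map hf hω (n + 1)) t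

/-- The loop `f^{kω}(θ) = k(ω) ∗ f^k(θ) ∗ k(ω)⁻¹` at `x₀`. -/
noncomputable def fpowLoop (f : C(E, E)) {x₀ : E} (ω : Path x₀ (f x₀)) (k : ℕ) (θ : Path x₀ x₀) :
    Path x₀ x₀ :=
  ((nPath f ω k).trans (θ.map (f.continuous.iterate k))).trans (nPath f ω k).symm

/-- `f^{kω}` applied to a fiber loop is again a fiber loop. -/
noncomputable def fpowFiberLoop (p : C(E, B)) (f : C(E, E)) (hf : ∀ x, p (f x) = p x) {x₀ : E}
    (ω : Path x₀ (f x₀)) (hω : ∀ t, p (ω t) = p x₀) (k : ℕ) (θ : FiberLoop p x₀) :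
    FiberLoop p x₀ :=
  ⟨fpowLoop f ω k θ.1,
    fiber_trans (fiber_trans (fiber_nPath hf hω k) (fiber_map hf θ.2 k))
      (fiber_symm (fiber_nPath hf hω k))⟩

/-- Auxiliary product `f^{0·mω}(θ) ∗ f^{1·mω}(θ) ∗ ⋯ ∗ f^{(j−1)·mω}(θ)`. -/
noncomputable def gammaAux (f : C(E, E)) {x₀ : E} (ω : Path x₀ (f x₀)) (m : ℕ) (θ : Path x₀ x₀) :
    ℕ → Path x₀ x₀
  | 0 => Path.refl x₀
  | (j + 1) => (gammaAux f ω m θ j).trans (fpowLoop f ω (j * m) θ)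

/-- The loop `γ_{m,n}(θ) = θ ∗ f^{mω}(θ) ∗ f^{2mω}(θ) ∗ ⋯ ∗ f^{(n−m)ω}(θ)`. -/
noncomputable def gammaLoop (f : C(E, E)) {x₀ : E} (ω : Path x₀ (f x₀)) (m n : ℕ) (θ : Path x₀ x₀) :
    Path x₀ x₀ :=
  gammaAux f ω m θ (n / m)

theorem fiber_gammaAux {p : C(E, B)} {f : C(E, E)} (hf : ∀ x, p (f x) = p x) {x₀ : E}
    {ω : Path x₀ (f x₀)} (hω : ∀ t, p (ω t) = p x₀) (m : ℕ) (θ : FiberLoop p x₀) :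
    ∀ (j : ℕ) (t : I), p (gammaAux f ω m θ.1 j t) = p x₀
  | 0, _ => rfl
  | (j + 1), t => by
    simp only [gammaAux]
    exact fiber_trans (fiber_gammaAux hf hω m θ j)
      (fpowFiberLoop p f hf ω hω (j * m) θ).2 t

/-- `γ_{m,n}` applied to a fiber loop is again a fiber loop. -/
noncomputable def gammaFiberLoop (p : C(E, B)) (f : C(E, E)) (hf : ∀ x, p (f x) = p x) {x₀ : E}
    (ω : Path x₀ (f x₀)) (hω : ∀ t, p (ω t) = p x₀) (m n : ℕ) (θ : FiberLoop p x₀) :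
    FiberLoop p x₀ :=
  ⟨gammaLoop f ω m n θ.1, fiber_gammaAux hf hω m θ (n / m)⟩

/-- `F` realizes the induced function `[f^ω]` on the Reidemeister classes of `f^n` over `B`. -/
def IsFOmegaMap (p : C(E, B)) (f : C(E, E)) (hf : ∀ x, p (f x) = p x) {x₀ : E}
    (ω : Path x₀ (f x₀)) (hω : ∀ t, p (ω t) = p x₀) (n : ℕ)
    (F : ReidemeisterSetB p (iterC f n) (nPath f ω n) →
      ReidemeisterSetB p (iterC f n) (nPath f ω n)) : Prop :=
  ∀ θ : FiberLoop p x₀,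
    F (Quot.mk _ θ) = Quot.mk _ (fpowFiberLoop p f hf ω hω 1 θ)

/-- `G` realizes the induced function `[γ_{m,n}]` from the Reidemeister classes of `f^m`
to those of `f^n` over `B`. -/
def IsGammaMap (p : C(E, B)) (f : C(E, E)) (hf : ∀ x, p (f x) = p x) {x₀ : E}
    (ω : Path x₀ (f x₀)) (hω : ∀ t, p (ω t) = p x₀) (m n : ℕ)
    (G : ReidemeisterSetB p (iterC f m) (nPath f ω m) →
      ReidemeisterSetB p (iterC f n) (nPath f ω n)) : Prop :=
  ∀ θ : FiberLoop p x₀,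
    G (Quot.mk _ θ) = Quot.mk _ (gammaFiberLoop p f hf ω hω m n θ)

/-- Fixed points of a continuous self-map. -/
def FixPt (g : C(E, E)) : Type := {x : E // g x = x}

/-- Nielsen equivalence over `B` of fixed points of `g`. -/
def NielsenRelB (p : C(E, B)) (g : C(E, E)) : FixPt g → FixPt g → Prop := fun x y =>
  ∃ (lam : Path x.1 y.1) (H : C(I × I, E)),
    (∀ t, H (t, 0) = lam t) ∧
    (∀ t, H (t, 1) = g (lam t)) ∧
    (∀ s, H (0, s) = x.1) ∧
    (∀ s, H (1, s) = y.1) ∧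
    (∀ t s, p (H (t, s)) = p (lam t))

/-- The set of Nielsen classes over `B`. -/
def NielsenSetB (p : C(E, B)) (g : C(E, E)) : Type := Quot (NielsenRelB p g)

/-- The space `E_B(g) = {(x, α) : p∘α const, α(0) = x, α(1) = g(x)}` with the topology
induced from `E × C(I, E)` (compact-open topology on paths). -/
def EBSpace (p : C(E, B)) (g : C(E, E)) : Type :=
  {z : E × C(I, E) // (∀ t, p (z.2 t) = p z.1) ∧ z.2 0 = z.1 ∧ z.2 1 = g z.1}

instance (p : C(E, B)) (g : C(E, E)) : TopologicalSpace (EBSpace p g) :=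
  instTopologicalSpaceSubtype

/-- Path components of a space. -/
def Pi0 (X : Type) [TopologicalSpace X] : Type := Quot (@Joined X _)

/-- The map `g_B : Fix(g) → E_B(g)`, `x ↦ (x, constant path at x)`. -/
def gBMap (p : C(E, B)) (g : C(E, E)) (x : FixPt g) : EBSpace p g :=
  ⟨(x.1, ContinuousMap.const I x.1), fun _ => rfl, rfl, x.2.symm⟩

instance (g : C(E, E)) : TopologicalSpace (FixPt g) := instTopologicalSpaceSubtype

/-- The Reidemeister class over `B` of a fiber loop. -/
def rClass (p : C(E, B)) (g : C(E, E)) {x₀ : E} (w : Path x₀ (g x₀)) (θ : FiberLoop p x₀) :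
    ReidemeisterSetB p g w := Quot.mk _ θ

/-- The Nielsen class over `B` of a fixed point. -/
def nClass (p : C(E, B)) {g : C(E, E)} (x : FixPt g) : NielsenSetB p g := Quot.mk _ x

/-- The path component of a point. -/
def piComp {X : Type} [TopologicalSpace X] (x : X) : Pi0 X := Quot.mk _ x

/-- A Reidemeister class of `f^n` over `B` is reducible to `m` if it lies in the image of
the induced function `[γ_{m,n}]`. -/
def ReducibleTo (p : C(E, B)) (f : C(E, E)) (hf : ∀ x, p (f x) = p x) {x₀ : E}
    (ω : Path x₀ (f x₀)) (hω : ∀ t, p (ω t) = p x₀) (n m : ℕ)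
    (a : ReidemeisterSetB p (iterC f n) (nPath f ω n)) : Prop :=
  ∃ G : ReidemeisterSetB p (iterC f m) (nPath f ω m) →
      ReidemeisterSetB p (iterC f n) (nPath f ω n),
    IsGammaMap p f hf ω hω m n G ∧ a ∈ Set.range G

namespace OrbitAux

attribute [local instance] Path.Homotopic.setoid

section QAlg
variable {X : Type} [TopologicalSpace X] {a b c d : X}

local infixl:70 " ⬝ " => Path.Homotopic.Quotient.trans

theorem qassoc (x : Path.Homotopic.Quotient a b) (y : Path.Homotopic.Quotient b c)
    (z : Path.Homotopic.Quotient c d) : x ⬝ y ⬝ z = x ⬝ (y ⬝ z) := by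
  induction x using Quotient.inductionOn
  induction y using Quotient.inductionOn
  induction z using Quotient.inductionOn
  exact Quotient.sound ⟨Path.Homotopy.transAssoc _ _ _⟩

theorem qrefl_comp (x : Path.Homotopic.Quotient a b) :
    (⟦Path.refl a⟧ : Path.Homotopic.Quotient a a) ⬝ x = x := by
  induction x using Quotient.inductionOn
  exact Quotient.sound ⟨Path.Homotopy.reflTrans _⟩

theorem qcomp_refl (x : Path.Homotopic.Quotient a b) :
    x ⬝ (⟦Path.refl b⟧ : Path.Homotopic.Quotient b b) = x := by
  induction x using Quotient.inductionOn
  exact Quotient.sound ⟨Path.Homotopy.transRefl _⟩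

/-- Inverse on path classes. -/
def qinv : Path.Homotopic.Quotient a b → Path.Homotopic.Quotient b a :=
  Quotient.map Path.symm (fun _ _ h => Nonempty.map Path.Homotopy.symm₂ h)

@[simp] theorem qinv_mk (γ : Path a b) : qinv ⟦γ⟧ = ⟦γ.symm⟧ := rfl

theorem qinv_comp_self (x : Path.Homotopic.Quotient a b) :
    qinv x ⬝ x = (⟦Path.refl b⟧ : Path.Homotopic.Quotient b b) := by
  induction x using Quotient.inductionOn
  exact Quotient.sound ⟨(Path.Homotopy.reflSymmTrans _).symm⟩

theorem qcomp_inv_self (x : Path.Homotopic.Quotient a b) :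
    x ⬝ qinv x = (⟦Path.refl a⟧ : Path.Homotopic.Quotient a a) := by
  induction x using Quotient.inductionOn
  exact Quotient.sound ⟨(Path.Homotopy.reflTransSymm _).symm⟩

theorem qinv_comp_cancel (x : Path.Homotopic.Quotient a b) (z : Path.Homotopic.Quotient b c) :
    qinv x ⬝ (x ⬝ z) = z := by
  rw [← qassoc, qinv_comp_self, qrefl_comp]

theorem qcomp_inv_cancel (x : Path.Homotopic.Quotient a b) (z : Path.Homotopic.Quotient a c) :
    x ⬝ (qinv x ⬝ z) = z := by
  rw [← qassoc, qcomp_inv_self, qrefl_comp]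

theorem qmk_trans (γ : Path a b) (δ : Path b c) :
    (⟦γ.trans δ⟧ : Path.Homotopic.Quotient a c) = ⟦γ⟧ ⬝ ⟦δ⟧ :=
  rfl

theorem qinv_comp (x : Path.Homotopic.Quotient a b) (y : Path.Homotopic.Quotient b c) :
    qinv (x ⬝ y) = qinv y ⬝ qinv x := by
  induction x using Quotient.inductionOn
  induction y using Quotient.inductionOn
  rw [← qmk_trans, qinv_mk, qinv_mk, qinv_mk, ← qmk_trans, Path.trans_symm]

end QAlg

section Phi

variable {X : Type} [TopologicalSpace X] (fX : C(X, X)) {x : X} (ωp : Path x (fX x))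

local infixl:70 " ⬝ " => Path.Homotopic.Quotient.trans

/-- Pushforward of path classes by `fX^[k]`. -/
def mapq (k : ℕ) {a b : X} (z : Path.Homotopic.Quotient a b) :
    Path.Homotopic.Quotient ((⇑fX)^[k] a) ((⇑fX)^[k] b) :=
  z.map (iterC fX k)

theorem mapq_mk (k : ℕ) {a b : X} (γ : Path a b) :
    mapq fX k ⟦γ⟧ = ⟦γ.map (fX.continuous.iterate k)⟧ := rfl

theorem mapq_comp (k : ℕ) {a b c : X} (z₁ : Path.Homotopic.Quotient a b)
    (z₂ : Path.Homotopic.Quotient b c) :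
    mapq fX k (z₁ ⬝ z₂) = mapq fX k z₁ ⬝ mapq fX k z₂ := by
  induction z₁ using Quotient.inductionOn
  induction z₂ using Quotient.inductionOn
  rw [← qmk_trans, mapq_mk, mapq_mk, mapq_mk, ← qmk_trans, Path.map_trans]

theorem mapq_inv (k : ℕ) {a b : X} (z : Path.Homotopic.Quotient a b) :
    mapq fX k (qinv z) = qinv (mapq fX k z) := by
  induction z using Quotient.inductionOn
  rw [qinv_mk, mapq_mk, mapq_mk, qinv_mk, Path.map_symm]

theorem mapq_one_mapq (k : ℕ) {a b : X} (z : Path.Homotopic.Quotient a b) :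
    mapq fX k (mapq fX 1 z) = mapq fX (k + 1) z := by
  induction z using Quotient.inductionOn
  rfl

theorem mapq_zero {a b : X} (z : Path.Homotopic.Quotient a b) : mapq fX 0 z = z := by
  induction z using Quotient.inductionOn
  rfl

/-- Class of `n(ω)`. -/
noncomputable def nuq (k : ℕ) : Path.Homotopic.Quotient x ((⇑fX)^[k] x) := ⟦nPath fX ωp k⟧

theorem nuq_succ (k : ℕ) :
    nuq fX ωp (k + 1) = nuq fX ωp k ⬝ ⟦ωp.map (fX.continuous.iterate k)⟧ := by
  match k with
  | 0 =>
    show (⟦ωp⟧ : Path.Homotopic.Quotient _ _) = _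
    rw [show ωp.map (fX.continuous.iterate 0) = ωp from rfl]
    exact (qrefl_comp _).symm
  | (k + 1) => exact qmk_trans _ _

/-- The conjugation operator `f^{kω}` on loop classes. -/
noncomputable def phiq (k : ℕ) (z : Path.Homotopic.Quotient x x) :
    Path.Homotopic.Quotient x x :=
  nuq fX ωp k ⬝ (mapq fX k z ⬝ qinv (nuq fX ωp k))

theorem phiq_zero (z : Path.Homotopic.Quotient x x) : phiq fX ωp 0 z = z := by
  show (⟦Path.refl x⟧ : Path.Homotopic.Quotient x x) ⬝ (mapq fX 0 z ⬝ qinv ⟦Path.refl x⟧) = z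
  erw [mapq_zero, qrefl_comp, qinv_mk, Path.refl_symm]
  exact qcomp_refl z

theorem fpow_mk (k : ℕ) (α : Path x x) :
    (⟦fpowLoop fX ωp k α⟧ : Path.Homotopic.Quotient x x) = phiq fX ωp k ⟦α⟧ := by
  show (⟦((nPath fX ωp k).trans (α.map (fX.continuous.iterate k))).trans (nPath fX ωp k).symm⟧ :
    Path.Homotopic.Quotient x x) = _
  erw [qmk_trans, qmk_trans, qassoc]
  rfl

theorem phiq_one_comp (k : ℕ) (z : Path.Homotopic.Quotient x x) :
    phiq fX ωp k (phiq fX ωp 1 z) = phiq fX ωp (k + 1) z := by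
  show nuq fX ωp k ⬝ (mapq fX k (nuq fX ωp 1 ⬝ (mapq fX 1 z ⬝ qinv (nuq fX ωp 1))) ⬝ _) =
    nuq fX ωp (k+1) ⬝ (mapq fX (k+1) z ⬝ qinv (nuq fX ωp (k+1)))
  conv_rhs => erw [nuq_succ, qinv_comp]
  erw [mapq_comp, mapq_comp, mapq_inv, mapq_one_mapq]
  have h1 : mapq fX k (nuq fX ωp 1) = (⟦ωp.map (fX.continuous.iterate k)⟧ :
      Path.Homotopic.Quotient _ _) := rfl
  erw [h1]
  have key : ∀ {a b : X} (A : Path.Homotopic.Quotient x a) (B : Path.Homotopic.Quotient a b)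
      (C : Path.Homotopic.Quotient b b),
      A ⬝ ((B ⬝ (C ⬝ qinv B)) ⬝ qinv A) = A ⬝ B ⬝ (C ⬝ (qinv B ⬝ qinv A)) := by
    intros
    simp only [qassoc, qinv_mk]
  exact key _ _ _

theorem phiq_iter (k : ℕ) (z : Path.Homotopic.Quotient x x) :
    (phiq fX ωp 1)^[k] z = phiq fX ωp k z := by
  induction k generalizing z with
  | zero => erw [Function.iterate_zero_apply, phiq_zero]
  | succ k ih => erw [Function.iterate_succ_apply, ih (phiq fX ωp 1 z), phiq_one_comp]

theorem phiq_add (k l : ℕ) (z : Path.Homotopic.Quotient x x) :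
    phiq fX ωp k (phiq fX ωp l z) = phiq fX ωp (k + l) z := by
  erw [← phiq_iter, ← phiq_iter, ← Function.iterate_add_apply, phiq_iter]

theorem phiq_mul (k : ℕ) (z₁ z₂ : Path.Homotopic.Quotient x x) :
    phiq fX ωp k (z₁ ⬝ z₂) = phiq fX ωp k z₁ ⬝ phiq fX ωp k z₂ := by
  show nuq fX ωp k ⬝ (mapq fX k (z₁ ⬝ z₂) ⬝ qinv (nuq fX ωp k)) = _
  erw [mapq_comp]
  simp only [phiq, qassoc, qinv_comp_cancel, qcomp_inv_cancel]

theorem phiq_refl (k : ℕ) : phiq fX ωp k ⟦Path.refl x⟧ = ⟦Path.refl x⟧ := by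
  show nuq fX ωp k ⬝ (mapq fX k ⟦Path.refl x⟧ ⬝ qinv (nuq fX ωp k)) = _
  erw [show mapq fX k ⟦Path.refl x⟧ = (⟦Path.refl ((⇑fX)^[k] x)⟧ :
    Path.Homotopic.Quotient _ _) from rfl, qrefl_comp, qcomp_inv_self]

theorem gamma_key (m : ℕ) (α : Path x x) : ∀ j : ℕ,
    phiq fX ωp m ⟦gammaAux fX ωp m α j⟧ =
      qinv ⟦α⟧ ⬝ (⟦gammaAux fX ωp m α j⟧ ⬝ phiq fX ωp (j * m) ⟦α⟧) := by
  intro j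
  induction j with
  | zero =>
    simp only [Nat.zero_mul, gammaAux]
    erw [phiq_refl, phiq_zero, qrefl_comp, qinv_comp_self]
  | succ j ih =>
    show phiq fX ωp m ⟦(gammaAux fX ωp m α j).trans (fpowLoop fX ωp (j * m) α)⟧ =
      qinv ⟦α⟧ ⬝ (⟦(gammaAux fX ωp m α j).trans (fpowLoop fX ωp (j * m) α)⟧ ⬝
        phiq fX ωp ((j + 1) * m) ⟦α⟧)
    erw [qmk_trans, phiq_mul, ih, fpow_mk, phiq_add]
    erw [show m + j * m = (j+1) * m by ring]
    simp only [qassoc]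

theorem iter_fpow_mk (m : ℕ) (β : Path x x) :
    (⟦(fpowLoop fX ωp 1)^[m] β⟧ : Path.Homotopic.Quotient x x) = (phiq fX ωp 1)^[m] ⟦β⟧ := by
  induction m generalizing β with
  | zero => rfl
  | succ m ih =>
    erw [Function.iterate_succ_apply, Function.iterate_succ_apply, ih (fpowLoop fX ωp 1 β),
      fpow_mk]
    rfl

theorem final_identity (m n : ℕ) (hmn : m ∣ n) (α : Path x x) :
    (⟦((fpowLoop fX ωp 1)^[m] (gammaLoop fX ωp m n α)).trans (nPath fX ωp n)⟧ :
        Path.Homotopic.Quotient x ((⇑fX)^[n] x)) =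
      ⟦α.symm.trans (((gammaLoop fX ωp m n α).trans (nPath fX ωp n)).trans
        (α.map (fX.continuous.iterate n)))⟧ := by
  erw [qmk_trans, iter_fpow_mk, phiq_iter]
  erw [show gammaLoop fX ωp m n α = gammaAux fX ωp m α (n / m) from rfl]
  erw [gamma_key, Nat.div_mul_cancel hmn]
  erw [qmk_trans, qmk_trans, qmk_trans]
  erw [show (⟦α.symm⟧ : Path.Homotopic.Quotient x x) = qinv ⟦α⟧ from rfl]
  erw [show (⟦α.map (fX.continuous.iterate n)⟧ :
      Path.Homotopic.Quotient ((⇑fX)^[n] x) ((⇑fX)^[n] x)) = mapq fX n ⟦α⟧ from rfl]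
  show (qinv ⟦α⟧ ⬝ (⟦gammaAux fX ωp m α (n/m)⟧ ⬝
      (nuq fX ωp n ⬝ (mapq fX n ⟦α⟧ ⬝ qinv (nuq fX ωp n))))) ⬝ nuq fX ωp n = _
  have key : ∀ {b : X} (A G : Path.Homotopic.Quotient x x) (N : Path.Homotopic.Quotient x b)
      (M : Path.Homotopic.Quotient b b),
      qinv A ⬝ (G ⬝ (N ⬝ (M ⬝ qinv N))) ⬝ N = qinv A ⬝ (G ⬝ N ⬝ M) := by
    intros
    simp only [nuq, qassoc, qinv_comp_self, qcomp_refl, qcomp_inv_cancel, qinv_comp_cancel]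
  exact key _ _ _ _

end Phi
section Fiber

variable {E B : Type} [TopologicalSpace E] [TopologicalSpace B]
variable (p : C(E, B)) (f : C(E, E)) (hf : ∀ x, p (f x) = p x) (x₀ : E)
variable (ω : Path x₀ (f x₀)) (hω : ∀ t, p (ω t) = p x₀)

/-- The fiber of `p` through `x₀`. -/
abbrev Fib : Type := {y : E // p y = p x₀}

/-- Basepoint of the fiber. -/
def ybase : Fib p x₀ := ⟨x₀, rfl⟩

/-- `f` restricted to the fiber. -/
def fibF : C(Fib p x₀, Fib p x₀) :=
  ⟨fun y => ⟨f y.1, (hf y.1).trans y.2⟩,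
    Continuous.subtype_mk (f.continuous.comp continuous_subtype_val) _⟩

theorem fibF_iter (k : ℕ) (y : Fib p x₀) :
    ((⇑(fibF p f hf x₀))^[k] y).1 = (⇑f)^[k] y.1 := by
  induction k generalizing y with
  | zero => rfl
  | succ k ih =>
    rw [Function.iterate_succ_apply, Function.iterate_succ_apply]
    exact ih _

/-- The lift of `ω` to the fiber. -/
def fibω : Path (ybase p x₀) (fibF p f hf x₀ (ybase p x₀)) where
  toFun t := ⟨ω t, hω t⟩
  continuous_toFun := Continuous.subtype_mk ω.continuous _
  source' := Subtype.ext ω.source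
  target' := Subtype.ext ω.target

/-- The lift of a fiber loop to the fiber. -/
def liftLoop (γ : Path x₀ x₀) (h : ∀ t, p (γ t) = p x₀) :
    Path (ybase p x₀) (ybase p x₀) where
  toFun t := ⟨γ t, h t⟩
  continuous_toFun := Continuous.subtype_mk γ.continuous _
  source' := Subtype.ext γ.source
  target' := Subtype.ext γ.target

section proj

variable {p x₀}

theorem proj_trans {a b c : E} {aY bY cY : Fib p x₀} {γE : Path a b} {δE : Path b c}
    {γY : Path aY bY} {δY : Path bY cY}
    (h1 : ∀ t, γE t = (γY t).1) (h2 : ∀ t, δE t = (δY t).1) :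
    ∀ t, (γE.trans δE) t = ((γY.trans δY) t).1 := by
  intro t
  rw [Path.trans_apply, Path.trans_apply]
  split_ifs
  · exact h1 _
  · exact h2 _

theorem proj_symm {a b : E} {aY bY : Fib p x₀} {γE : Path a b} {γY : Path aY bY}
    (h : ∀ t, γE t = (γY t).1) : ∀ t, (γE.symm) t = ((γY.symm) t).1 := fun t => h _

variable {f}

theorem proj_map (hf : ∀ x, p (f x) = p x) {a b : E} {aY bY : Fib p x₀} {γE : Path a b}
    {γY : Path aY bY} (h : ∀ t, γE t = (γY t).1) (k : ℕ) :
    ∀ t, (γE.map (f.continuous.iterate k)) t =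
      ((γY.map ((fibF p f hf x₀).continuous.iterate k)) t).1 := by
  intro t
  show (⇑f)^[k] (γE t) = ((⇑(fibF p f hf x₀))^[k] (γY t)).1
  rw [fibF_iter, h]

variable {ω hω}

theorem proj_nPath (hf : ∀ x, p (f x) = p x) (hω : ∀ t, p (ω t) = p x₀) :
    ∀ (k : ℕ) (t : I), nPath f ω k t = ((nPath (fibF p f hf x₀) (fibω p f hf x₀ ω hω) k) t).1
  | 0, _ => rfl
  | 1, _ => rfl
  | (k + 2), t => by
    show ((nPath f ω (k+1)).trans (ω.map (f.continuous.iterate (k+1)))) t = _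
    exact proj_trans (proj_nPath hf hω (k+1)) (proj_map hf (fun _ => rfl) (k+1)) t

theorem proj_fpow (hf : ∀ x, p (f x) = p x) (hω : ∀ t, p (ω t) = p x₀) (k : ℕ)
    {θE : Path x₀ x₀} {θY : Path (ybase p x₀) (ybase p x₀)} (h : ∀ t, θE t = (θY t).1) :
    ∀ t, (fpowLoop f ω k θE) t =
      ((fpowLoop (fibF p f hf x₀) (fibω p f hf x₀ ω hω) k θY) t).1 :=
  proj_trans (proj_trans (proj_nPath hf hω k) (proj_map hf h k))
    (proj_symm (proj_nPath hf hω k))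

theorem proj_gammaAux (hf : ∀ x, p (f x) = p x) (hω : ∀ t, p (ω t) = p x₀) (m : ℕ)
    {θE : Path x₀ x₀} {θY : Path (ybase p x₀) (ybase p x₀)} (h : ∀ t, θE t = (θY t).1) :
    ∀ (j : ℕ) (t : I), (gammaAux f ω m θE j) t =
      ((gammaAux (fibF p f hf x₀) (fibω p f hf x₀ ω hω) m θY j) t).1
  | 0, _ => rfl
  | (j + 1), t => by
    show ((gammaAux f ω m θE j).trans (fpowLoop f ω (j * m) θE)) t = _
    exact proj_trans (proj_gammaAux hf hω m h j) (proj_fpow hf hω (j * m) h) t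

theorem proj_iter_fpow (hf : ∀ x, p (f x) = p x) (hω : ∀ t, p (ω t) = p x₀) (k : ℕ)
    {θE : Path x₀ x₀} {θY : Path (ybase p x₀) (ybase p x₀)} (h : ∀ t, θE t = (θY t).1) :
    ∀ t, ((fpowLoop f ω 1)^[k] θE) t =
      (((fpowLoop (fibF p f hf x₀) (fibω p f hf x₀ ω hω) 1)^[k] θY) t).1 := by
  induction k generalizing θE θY with
  | zero => exact h
  | succ k ih =>
    rw [Function.iterate_succ_apply, Function.iterate_succ_apply]
    exact ih (proj_fpow hf hω 1 h)

end proj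

theorem fpowFiber_iter_val (k : ℕ) (ψ : FiberLoop p x₀) :
    ((fpowFiberLoop p f hf ω hω 1)^[k] ψ).1 = (fpowLoop f ω 1)^[k] ψ.1 := by
  induction k with
  | zero => rfl
  | succ k ih =>
    rw [Function.iterate_succ_apply', Function.iterate_succ_apply']
    show (fpowLoop f ω 1 ((fpowFiberLoop p f hf ω hω 1)^[k] ψ).1) = _
    rw [ih]

end Fiber

section Square

theorem path_congr {X : Type} [TopologicalSpace X] {a b : X} (γ : Path a b) {u v : I}
    (h : (u : ℝ) = (v : ℝ)) : γ u = γ v := congrArg γ (Subtype.ext h)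

/-- First coordinate of the square reparametrization. -/
noncomputable def sgu (t : I) : I :=
  ⟨max 0 (2 * (t : ℝ) - 1), le_max_left _ _, max_le (by norm_num) (by linarith [t.2.2])⟩

/-- Second coordinate of the square reparametrization. -/
noncomputable def sgv (t s : I) : I :=
  ⟨(1 - (s : ℝ)) * max 0 ((1 - 2 * (t : ℝ)) / 2) + s * min 1 ((2 * (t : ℝ) + 3) / 4), by
    have h1 : (0 : ℝ) ≤ 1 - s := by linarith [s.2.2]
    have h2 := le_max_left (0 : ℝ) ((1 - 2 * (t : ℝ)) / 2)
    have h3 : (0 : ℝ) ≤ min 1 ((2 * (t : ℝ) + 3) / 4) := le_min (by norm_num)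
      (by linarith [t.2.1])
    have h4 : max 0 ((1 - 2 * (t : ℝ)) / 2) ≤ 1 := max_le (by norm_num) (by linarith [t.2.1])
    have h5 : min 1 ((2 * (t : ℝ) + 3) / 4) ≤ 1 := min_le_left _ _
    constructor
    · nlinarith [s.2.1]
    · nlinarith [s.2.1, s.2.2]⟩

theorem sgu_coe (t : I) : (sgu t : ℝ) = max 0 (2 * (t : ℝ) - 1) := rfl

theorem sgv_coe (t s : I) : (sgv t s : ℝ) =
    (1 - (s : ℝ)) * max 0 ((1 - 2 * (t : ℝ)) / 2) + s * min 1 ((2 * (t : ℝ) + 3) / 4) := rfl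

/-- The square reparametrization as a continuous map. -/
noncomputable def sgm : C(I × I, I × I) where
  toFun z := (sgu z.1, sgv z.1 z.2)
  continuous_toFun := by
    apply Continuous.prodMk
    · apply Continuous.subtype_mk
      fun_prop
    · apply Continuous.subtype_mk
      fun_prop

end Square

section Rel

variable {E B : Type} [TopologicalSpace E] [TopologicalSpace B]
variable (p : C(E, B)) (f : C(E, E)) (hf : ∀ x, p (f x) = p x) (x₀ : E)
variable (ω : Path x₀ (f x₀)) (hω : ∀ t, p (ω t) = p x₀) (n : ℕ)

theorem relB_of_conj (θl θr : FiberLoop p x₀)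
    (c₀ γl γr : Path (ybase p x₀) (ybase p x₀))
    (hl : ∀ t, θl.1 t = (γl t).1) (hr : ∀ t, θr.1 t = (γr t).1)
    (hhom : Path.Homotopic
      (c₀.symm.trans ((γl.trans (nPath (fibF p f hf x₀) (fibω p f hf x₀ ω hω) n)).trans
        (c₀.map ((fibF p f hf x₀).continuous.iterate n))))
      (γr.trans (nPath (fibF p f hf x₀) (fibω p f hf x₀ ω hω) n))) :
    Quot.mk (ReidemeisterRelB p (iterC f n) (nPath f ω n)) θl =
      Quot.mk (ReidemeisterRelB p (iterC f n) (nPath f ω n)) θr := by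
  obtain ⟨G⟩ := hhom
  let Pl := c₀.symm.trans ((γl.trans (nPath (fibF p f hf x₀) (fibω p f hf x₀ ω hω) n)).trans
    (c₀.map ((fibF p f hf x₀).continuous.iterate n)))
  let Pr := γr.trans (nPath (fibF p f hf x₀) (fibω p f hf x₀ ω hω) n)
  let cE : Path x₀ x₀ := c₀.map continuous_subtype_val
  let c : Path x₀ x₀ := cE.trans (Path.refl x₀)
  let H : C(I × I, E) :=
    (⟨Subtype.val, continuous_subtype_val⟩ : C(Fib p x₀, E)).comp
      ((G.toHomotopy.toContinuousMap).comp sgm)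
  have happ : ∀ z : I × I, H z = (G (sgu z.1, sgv z.1 z.2)).1 := fun z => rfl
  have hcval : ∀ u : I, cE u = (c₀ u).1 := fun u => rfl
  have hGzero : ∀ v : I, G (0, v) = Pl v := fun v => G.apply_zero v
  have hGone : ∀ v : I, G (1, v) = Pr v := fun v => G.apply_one v
  have cond1 : ∀ t, H (t, 0) = c t := by
    intro t
    rw [happ]
    show (G (sgu t, sgv t 0)).1 = (cE.trans (Path.refl x₀)) t
    rw [Path.trans_apply]
    by_cases ht : (t : ℝ) ≤ 1 / 2
    · have hu : sgu t = 0 := Subtype.ext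
        (by rw [sgu_coe, Set.Icc.coe_zero, max_eq_left]; linarith)
      have hv : sgv t 0 = ⟨(1 - 2 * (t : ℝ)) / 2,
          by constructor <;> [linarith [t.2.1]; linarith [t.2.1]]⟩ :=
        Subtype.ext (by
          rw [sgv_coe, Set.Icc.coe_zero,
            max_eq_right (by linarith : (0:ℝ) ≤ (1 - 2 * (t : ℝ)) / 2)]
          ring)
      rw [hu, hv, hGzero, dif_pos ht]
      show (Pl _).1 = (c₀ _).1
      rw [Path.trans_apply]
      split_ifs with h2
      · rw [Path.symm_apply]
        exact congrArg Subtype.val (path_congr c₀ (by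
          simp only [unitInterval.coe_symm_eq]
          show 1 - 2 * ((1 - 2 * (t:ℝ)) / 2) = 2 * (t:ℝ)
          ring))
      · exfalso; apply h2; show (1 - 2 * (t:ℝ)) / 2 ≤ 1/2; linarith [t.2.1]
    · have hu : sgu t = ⟨2 * (t : ℝ) - 1, by constructor <;> [linarith; linarith [t.2.2]]⟩ :=
        Subtype.ext (by rw [sgu_coe, max_eq_right] ; linarith)
      have hv : sgv t 0 = 0 := Subtype.ext (by
        rw [sgv_coe, Set.Icc.coe_zero,
          max_eq_left (by linarith : (1 - 2 * (t : ℝ)) / 2 ≤ 0)]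
        ring)
      rw [hu, hv, dif_neg ht]
      show (G (_, 0)).1 = x₀
      rw [Path.Homotopy.source]
      rfl
  have cond2 : ∀ t, H (t, 1) = (iterC f n) (c t) := by
    intro t
    rw [happ]
    show (G (sgu t, sgv t 1)).1 = (iterC f n) ((cE.trans (Path.refl x₀)) t)
    rw [Path.trans_apply]
    by_cases ht : (t : ℝ) ≤ 1 / 2
    · have hu : sgu t = 0 := Subtype.ext
        (by rw [sgu_coe, Set.Icc.coe_zero, max_eq_left]; linarith)
      have hv : sgv t 1 = ⟨(2 * (t : ℝ) + 3) / 4,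
          by constructor <;> [linarith [t.2.1]; linarith]⟩ :=
        Subtype.ext (by
          rw [sgv_coe, Set.Icc.coe_one,
            min_eq_right (by linarith : (2 * (t : ℝ) + 3) / 4 ≤ 1)]
          ring)
      rw [hu, hv, hGzero, dif_pos ht]
      have main : ∀ u w : I, (u : ℝ) = (2 * (t : ℝ) + 3) / 4 → (w : ℝ) = 2 * (t : ℝ) →
          (Pl u).1 = (iterC f n) (cE w) := by
        intro u w hu' hw'
        rw [Path.trans_apply,
          dif_neg (show ¬((u : ℝ) ≤ 1 / 2) by rw [hu']; push_neg; linarith [t.2.1])]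
        have step2 : ∀ v : I, (v : ℝ) = 2 * (u : ℝ) - 1 →
            (((γl.trans (nPath (fibF p f hf x₀) (fibω p f hf x₀ ω hω) n)).trans
              (c₀.map ((fibF p f hf x₀).continuous.iterate n))) v).1 =
              (iterC f n) (cE w) := by
          intro v hv'
          rw [Path.trans_apply]
          split_ifs with h2
          · have ht0 : (t : ℝ) = 0 := le_antisymm
              (by rw [hv', hu'] at h2; linarith) t.2.1
            have step3 : ∀ z : I, (z : ℝ) = 2 * (v : ℝ) →
                ((γl.trans (nPath (fibF p f hf x₀) (fibω p f hf x₀ ω hω) n)) z).1 =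
                  (iterC f n) (cE w) := by
              intro z hz'
              rw [path_congr (γl.trans (nPath (fibF p f hf x₀) (fibω p f hf x₀ ω hω) n))
                (show (z : ℝ) = ((1 : I) : ℝ) by
                  rw [hz', hv', hu', ht0, Set.Icc.coe_one]; ring)]
              rw [Path.target]
              rw [path_congr cE (show (w : ℝ) = ((0 : I) : ℝ) by
                rw [hw', ht0, Set.Icc.coe_zero]; ring)]
              rw [hcval, Path.source]
              show ((⇑(fibF p f hf x₀))^[n] (ybase p x₀)).1 = (⇑f)^[n] ((ybase p x₀).1)
              rw [fibF_iter]
            exact step3 _ rfl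
          · have step3 : ∀ z : I, (z : ℝ) = 2 * (v : ℝ) - 1 →
                ((c₀.map ((fibF p f hf x₀).continuous.iterate n)) z).1 =
                  (iterC f n) (cE w) := by
              intro z hz'
              show ((⇑(fibF p f hf x₀))^[n] (c₀ z)).1 = (⇑f)^[n] (cE w)
              rw [fibF_iter, hcval]
              exact congrArg ((⇑f)^[n]) (congrArg Subtype.val (path_congr c₀
                (by rw [hz', hv', hu', hw']; ring)))
            exact step3 _ rfl
        exact step2 _ rfl
      exact main _ _ rfl rfl
    · have hu : sgu t = ⟨2 * (t : ℝ) - 1, by constructor <;> [linarith; linarith [t.2.2]]⟩ :=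
        Subtype.ext (by rw [sgu_coe, max_eq_right]; linarith)
      have hv : sgv t 1 = 1 := Subtype.ext (by
        rw [sgv_coe, Set.Icc.coe_one,
          min_eq_left (by linarith : (1:ℝ) ≤ (2 * (t : ℝ) + 3) / 4)]
        ring)
      rw [hu, hv, dif_neg ht]
      show (G (_, 1)).1 = (iterC f n) x₀
      rw [Path.Homotopy.target]
      show ((⇑(fibF p f hf x₀))^[n] (ybase p x₀)).1 = (⇑f)^[n] x₀
      rw [fibF_iter]
      rfl
  have cond3 : ∀ s, H (0, s) = (θl.1.trans (nPath f ω n)) s := by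
    intro s
    rw [happ]
    show (G (sgu 0, sgv 0 s)).1 = (θl.1.trans (nPath f ω n)) s
    have hu : sgu 0 = 0 := Subtype.ext (by
      have h0 : 2 * (((0:I)):ℝ) - 1 ≤ 0 := by norm_num
      rw [sgu_coe, max_eq_left h0, Set.Icc.coe_zero])
    have hv : sgv 0 s = ⟨((s:ℝ) + 2) / 4,
        by constructor <;> [linarith [s.2.1]; linarith [s.2.2]]⟩ :=
      Subtype.ext (by
        rw [sgv_coe, Set.Icc.coe_zero]
        rw [max_eq_right (by norm_num : (0:ℝ) ≤ (1 - 2 * (0:ℝ)) / 2)]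
        rw [min_eq_right (by norm_num : ((2 * (0:ℝ) + 3) / 4) ≤ 1)]
        ring)
    rw [hu, hv, hGzero]
    have main : ∀ u : I, (u : ℝ) = ((s:ℝ) + 2) / 4 →
        (Pl u).1 = (θl.1.trans (nPath f ω n)) s := by
      intro u hu'
      rw [Path.trans_apply]
      split_ifs with h
      · have hs : (s : ℝ) = 0 := le_antisymm (by rw [hu'] at h; linarith) s.2.1
        have step2 : ∀ z : I, (z : ℝ) = 2 * (u : ℝ) → (c₀.symm z).1 =
            (θl.1.trans (nPath f ω n)) s := by
          intro z hz'
          rw [Path.trans_apply, dif_pos (by rw [hs]; norm_num : (s:ℝ) ≤ 1/2)]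
          have step3 : ∀ w : I, (w : ℝ) = 2 * (s : ℝ) → (c₀.symm z).1 = θl.1 w := by
            intro w hw'
            rw [path_congr θl.1 (show (w : ℝ) = ((0 : I) : ℝ) by
              rw [hw', hs, Set.Icc.coe_zero]; ring)]
            rw [Path.source]
            exact congrArg Subtype.val ((path_congr c₀.symm (show (z:ℝ) = ((1:I):ℝ) by
              rw [hz', hu', hs, Set.Icc.coe_one]; ring)).trans c₀.symm.target)
          exact step3 _ rfl
        exact step2 _ rfl
      · have step2 : ∀ v : I, (v : ℝ) = 2 * (u : ℝ) - 1 →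
            ((((γl.trans (nPath (fibF p f hf x₀) (fibω p f hf x₀ ω hω) n)).trans
              (c₀.map ((fibF p f hf x₀).continuous.iterate n)))) v).1 =
              (θl.1.trans (nPath f ω n)) s := by
          intro v hv'
          rw [Path.trans_apply, dif_pos (by rw [hv', hu']; linarith [s.2.2] : (v:ℝ) ≤ 1/2)]
          rw [path_congr (γl.trans (nPath (fibF p f hf x₀) (fibω p f hf x₀ ω hω) n))
            (show ((⟨2 * (v:ℝ), by constructor <;>
              [linarith [v.2.1]; linarith [hv', hu', s.2.2]]⟩ : I) : ℝ) = (s : ℝ) by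
              show 2 * (v:ℝ) = (s:ℝ); rw [hv', hu']; ring)]
          exact (proj_trans hl (proj_nPath hf hω n) s).symm
        exact step2 _ rfl
    exact main _ rfl
  have cond4 : ∀ s, H (1, s) = (θr.1.trans (nPath f ω n)) s := by
    intro s
    rw [happ]
    show (G (sgu 1, sgv 1 s)).1 = (θr.1.trans (nPath f ω n)) s
    have hu : sgu 1 = 1 := Subtype.ext (by
      have h0 : (0:ℝ) ≤ 2 * (((1:I)):ℝ) - 1 := by norm_num
      rw [sgu_coe, max_eq_right h0, Set.Icc.coe_one]; norm_num)
    have hv : sgv 1 s = s := Subtype.ext (by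
      rw [sgv_coe, Set.Icc.coe_one]
      rw [max_eq_left (by norm_num : ((1 - 2 * (1:ℝ)) / 2) ≤ 0)]
      rw [min_eq_left (by norm_num : (1:ℝ) ≤ (2 * (1:ℝ) + 3) / 4)]
      ring)
    rw [hu, hv, hGone]
    exact (proj_trans hr (proj_nPath hf hω n) s).symm
  have cond5 : ∀ (t s : I), p (H (t, s)) = p (c t) := by
    intro t s
    rw [happ]
    have hc : p (c t) = p x₀ := by
      show p ((cE.trans (Path.refl x₀)) t) = p x₀
      rw [Path.trans_apply]
      split_ifs
      · exact (c₀ _).2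
      · rfl
    rw [hc]
    exact (G (sgu t, sgv t s)).2
  exact Quot.sound ⟨c, H, cond1, cond3, cond2, cond4, cond5⟩

theorem key_reduction (m : ℕ) (hmn : m ∣ n) (θ : FiberLoop p x₀) :
    Quot.mk (ReidemeisterRelB p (iterC f n) (nPath f ω n))
      ((fpowFiberLoop p f hf ω hω 1)^[m] (gammaFiberLoop p f hf ω hω m n θ)) =
    Quot.mk (ReidemeisterRelB p (iterC f n) (nPath f ω n))
      (gammaFiberLoop p f hf ω hω m n θ) := by
  have hα : ∀ t, θ.1 t = ((liftLoop p x₀ θ.1 θ.2) t).1 := fun _ => rfl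
  have hl : ∀ t, (gammaFiberLoop p f hf ω hω m n θ).1 t =
      ((gammaLoop (fibF p f hf x₀) (fibω p f hf x₀ ω hω) m n (liftLoop p x₀ θ.1 θ.2)) t).1 :=
    fun t => proj_gammaAux hf hω m hα (n / m) t
  have hr : ∀ t, ((fpowFiberLoop p f hf ω hω 1)^[m] (gammaFiberLoop p f hf ω hω m n θ)).1 t =
      (((fpowLoop (fibF p f hf x₀) (fibω p f hf x₀ ω hω) 1)^[m]
        (gammaLoop (fibF p f hf x₀) (fibω p f hf x₀ ω hω) m n (liftLoop p x₀ θ.1 θ.2))) t).1 := by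
    intro t
    rw [fpowFiber_iter_val]
    exact proj_iter_fpow hf hω m hl t
  have hq := final_identity (fibF p f hf x₀) (fibω p f hf x₀ ω hω) m n hmn
    (liftLoop p x₀ θ.1 θ.2)
  have hhom : Path.Homotopic
      (((fpowLoop (fibF p f hf x₀) (fibω p f hf x₀ ω hω) 1)^[m]
        (gammaLoop (fibF p f hf x₀) (fibω p f hf x₀ ω hω) m n (liftLoop p x₀ θ.1 θ.2))).trans
          (nPath (fibF p f hf x₀) (fibω p f hf x₀ ω hω) n))
      ((liftLoop p x₀ θ.1 θ.2).symm.trans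
        (((gammaLoop (fibF p f hf x₀) (fibω p f hf x₀ ω hω) m n
            (liftLoop p x₀ θ.1 θ.2)).trans (nPath (fibF p f hf x₀) (fibω p f hf x₀ ω hω) n)).trans
          ((liftLoop p x₀ θ.1 θ.2).map ((fibF p f hf x₀).continuous.iterate n)))) :=
    Quotient.exact hq
  exact (relB_of_conj p f hf x₀ ω hω n (gammaFiberLoop p f hf ω hω m n θ)
    ((fpowFiberLoop p f hf ω hω 1)^[m] (gammaFiberLoop p f hf ω hω m n θ))
    (liftLoop p x₀ θ.1 θ.2)
    (gammaLoop (fibF p f hf x₀) (fibω p f hf x₀ ω hω) m n (liftLoop p x₀ θ.1 θ.2))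
    ((fpowLoop (fibF p f hf x₀) (fibω p f hf x₀ ω hω) 1)^[m]
      (gammaLoop (fibF p f hf x₀) (fibω p f hf x₀ ω hω) m n (liftLoop p x₀ θ.1 θ.2)))
    hl hr hhom.symm).symm

end Rel
end OrbitAux

theorem orbit_length_dvd_depth_algebraic {E B : Type} [TopologicalSpace E] [TopologicalSpace B]
    [CompactSpace E] [CompactSpace B] [PathConnectedSpace E] [PathConnectedSpace B]
    [T2Space E] [T2Space B] {dE dB : ℕ}
    [ChartedSpace (EuclideanSpace ℝ (Fin dE)) E]
    [ChartedSpace (EuclideanSpace ℝ (Fin dB)) B]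
    (p : C(E, B)) (hp : IsHurewiczFibration p)
    (f : C(E, E)) (hf : ∀ x, p (f x) = p x)
    (x₀ : E) (ω : Path x₀ (f x₀)) (hω : ∀ t, p (ω t) = p x₀)
    (n l d : ℕ) (hn : 0 < n)
    (a : ReidemeisterSetB p (iterC f n) (nPath f ω n))
    (F : ReidemeisterSetB p (iterC f n) (nPath f ω n) →
      ReidemeisterSetB p (iterC f n) (nPath f ω n))
    (hF : IsFOmegaMap p f hf ω hω n F)
    (hl : IsLeast {r : ℕ | 0 < r ∧ F^[r] a = a} l)
    (hd : IsLeast {m : ℕ | 0 < m ∧ m ∣ n ∧ ReducibleTo p f hf ω hω n m a} d) :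
    (∀ m, 0 < m → m ∣ n → ReducibleTo p f hf ω hω n m a → F^[m] a = a) ∧ l ∣ d := by
  have part1 : ∀ m, 0 < m → m ∣ n → ReducibleTo p f hf ω hω n m a → F^[m] a = a := by
    intro m _ hmn hred
    obtain ⟨G, hG, b, hb⟩ := hred
    obtain ⟨θ, rfl⟩ := Quot.exists_rep b
    have ha : a = Quot.mk _ (gammaFiberLoop p f hf ω hω m n θ) := by
      rw [← hb, hG θ]
    have hFiter : ∀ (k : ℕ) (ψ : FiberLoop p x₀),
        F^[k] (Quot.mk _ ψ) = Quot.mk _ ((fpowFiberLoop p f hf ω hω 1)^[k] ψ) := by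
      intro k
      induction k with
      | zero => intro ψ; rfl
      | succ k ih =>
        intro ψ
        erw [Function.iterate_succ_apply', Function.iterate_succ_apply', ih ψ,
          hF ((fpowFiberLoop p f hf ω hω 1)^[k] ψ)]
    rw [ha, hFiter m]
    exact OrbitAux.key_reduction p f hf x₀ ω hω n m hmn θ
  refine ⟨part1, ?_⟩
  have hFl : F^[l] a = a := hl.1.2
  have hl0 : 0 < l := hl.1.1
  have hFd : F^[d] a = a := part1 d hd.1.1 hd.1.2.1 hd.1.2.2
  have hmul : ∀ q : ℕ, F^[l * q] a = a := by
    intro q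
    induction q with
    | zero => rw [Nat.mul_zero]; rfl
    | succ q ih =>
      rw [Nat.mul_succ, Function.iterate_add_apply, hFl, ih]
  have hmod : F^[d % l] a = a := by
    have h1 : F^[d % l + l * (d / l)] a = a := by
      rw [Nat.mod_add_div]; exact hFd
    rwa [Function.iterate_add_apply, hmul] at h1
  rcases Nat.eq_zero_or_pos (d % l) with h0 | hpos
  · exact Nat.dvd_of_mod_eq_zero h0
  · exfalso
    have hle : l ≤ d % l := hl.2 ⟨hpos, hmod⟩
    exact absurd (Nat.mod_lt d hl0) (not_lt.mpr hle)
end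

section
/- Let H: E × I → E be a homotopy over B from f to g, let ν = ω ∗ H(x₀, ·), and define H^n inductively by H^1 = H and H^n(x,t) = H^{n−1}(H(x,t), t). Then for every n ≥ 1 the path n(ν) is homotopic, relative to endpoints and by a homotopy whose image lies in the fiber p⁻¹(p(x₀)), to the path n(ω) ∗ H^n(x₀, ·). -/
open unitInterval

variable {E B : Type} [TopologicalSpace E] [TopologicalSpace B]

/-- The iterated homotopy `H^n`, defined by `H⁰(x,t) = x` and `H^{n+1}(x,t) = Hⁿ(H(x,t),t)`
(so that `H¹ = H`). -/
def homotopyIter (H : C(E × I, E)) : ℕ → C(E × I, E)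
  | 0 => ⟨fun z => z.1, continuous_fst⟩
  | (n + 1) => ⟨fun z => homotopyIter H n (H z, z.2),
      (homotopyIter H n).continuous.comp (H.continuous.prodMk continuous_snd)⟩

theorem homotopyIter_zero {f : C(E, E)} {H : C(E × I, E)} (hK₀ : ∀ x, H (x, 0) = f x) :
    ∀ (n : ℕ) (x : E), homotopyIter H n (x, 0) = (⇑f)^[n] x
  | 0, _ => rfl
  | (n + 1), x => by
      show homotopyIter H n (H (x, 0), 0) = (⇑f)^[n + 1] x
      rw [hK₀ x]
      exact homotopyIter_zero hK₀ n (f x)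

theorem homotopyIter_one {g : C(E, E)} {H : C(E × I, E)} (hK₁ : ∀ x, H (x, 1) = g x) :
    ∀ (n : ℕ) (x : E), homotopyIter H n (x, 1) = (⇑g)^[n] x
  | 0, _ => rfl
  | (n + 1), x => by
      show homotopyIter H n (H (x, 1), 1) = (⇑g)^[n + 1] x
      rw [hK₁ x]
      exact homotopyIter_one hK₁ n (g x)

theorem fiber_homotopyIter {p : C(E, B)} {H : C(E × I, E)}
    (hKB : ∀ x t, p (H (x, t)) = p x) :
    ∀ (n : ℕ) (x : E) (t : I), p (homotopyIter H n (x, t)) = p x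
  | 0, _, _ => rfl
  | (n + 1), x, t => by
      show p (homotopyIter H n (H (x, t), t)) = p x
      rw [fiber_homotopyIter hKB n (H (x, t)) t, hKB x t]

/-- The path `t ↦ Hⁿ(x₀, t)` from `fⁿ(x₀)` to `gⁿ(x₀)`. -/
def hIterPath {f g : C(E, E)} (H : C(E × I, E)) (hK₀ : ∀ x, H (x, 0) = f x)
    (hK₁ : ∀ x, H (x, 1) = g x) (n : ℕ) (x₀ : E) :
    Path ((⇑f)^[n] x₀) ((⇑g)^[n] x₀) where
  toFun := fun t => homotopyIter H n (x₀, t)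
  continuous_toFun := (homotopyIter H n).continuous.comp (continuous_const.prodMk continuous_id)
  source' := homotopyIter_zero hK₀ n x₀
  target' := homotopyIter_one hK₁ n x₀

section NPathNuAux

open unitInterval

variable {E B : Type} [TopologicalSpace E] [TopologicalSpace B]

/-- Fiberwise homotopy (rel endpoints) between two paths. -/
def FHtp (p : C(E, B)) (x₀ : E) {a b : E} (P₀ P₁ : Path a b) : Prop :=
  ∃ K : Path.Homotopy P₀ P₁, ∀ z, p (K z) = p x₀

/-- Convex combination in the unit interval. -/
def mixI (u a b : I) : I :=
  ⟨(1 - (u : ℝ)) * a + u * b, by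
    have h1 := u.2.1; have h2 := u.2.2; have h3 := a.2.1; have h4 := a.2.2
    have h5 := b.2.1; have h6 := b.2.2
    constructor <;> nlinarith⟩

@[simp] theorem mixI_zero (a b : I) : mixI 0 a b = a := by
  apply Subtype.ext; simp [mixI]

@[simp] theorem mixI_one (a b : I) : mixI 1 a b = b := by
  apply Subtype.ext; simp [mixI]

@[simp] theorem mixI_self (u a : I) : mixI u a a = a := by
  apply Subtype.ext; show (1 - (u : ℝ)) * a + u * a = a; ring

theorem continuous_mixI : Continuous (fun x : I × I × I => mixI x.1 x.2.1 x.2.2) := by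
  apply Continuous.subtype_mk
  fun_prop

theorem Continuous.mixI {X : Type} [TopologicalSpace X] {u a b : X → I}
    (hu : Continuous u) (ha : Continuous a) (hb : Continuous b) :
    Continuous fun x => mixI (u x) (a x) (b x) :=
  continuous_mixI.comp (hu.prodMk (ha.prodMk hb))

namespace FHtp

variable {p : C(E, B)} {x₀ : E}

theorem refl {a b : E} (P : Path a b) (hP : ∀ t, p (P t) = p x₀) : FHtp p x₀ P P :=
  ⟨Path.Homotopy.refl P, fun z => hP z.2⟩

theorem symm {a b : E} {P₀ P₁ : Path a b} (h : FHtp p x₀ P₀ P₁) : FHtp p x₀ P₁ P₀ := by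
  obtain ⟨K, hK⟩ := h
  exact ⟨K.symm, fun z => hK (σ z.1, z.2)⟩

theorem trans {a b : E} {P₀ P₁ P₂ : Path a b} (h : FHtp p x₀ P₀ P₁) (h' : FHtp p x₀ P₁ P₂) :
    FHtp p x₀ P₀ P₂ := by
  obtain ⟨K, hK⟩ := h
  obtain ⟨L, hL⟩ := h'
  refine ⟨K.trans L, fun z => ?_⟩
  rw [Path.Homotopy.trans_apply]
  split_ifs <;> first | exact hK _ | exact hL _

theorem hcomp {a b c : E} {P₀ Q₀ : Path a b} {P₁ Q₁ : Path b c}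
    (h : FHtp p x₀ P₀ Q₀) (h' : FHtp p x₀ P₁ Q₁) :
    FHtp p x₀ (P₀.trans P₁) (Q₀.trans Q₁) := by
  obtain ⟨K, hK⟩ := h
  obtain ⟨L, hL⟩ := h'
  refine ⟨K.hcomp L, fun z => ?_⟩
  rw [Path.Homotopy.hcomp_apply]
  split_ifs <;> first | exact hK _ | exact hL _

theorem cast {a b : E} {P₀ P₁ Q₀ Q₁ : Path a b} (h₀ : P₀ = Q₀) (h₁ : P₁ = Q₁)
    (h : FHtp p x₀ P₀ P₁) : FHtp p x₀ Q₀ Q₁ := by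
  subst h₀; subst h₁; exact h

/-- Fiberwise homotopy from a reparametrization. -/
theorem reparam {a b : E} (P P₂ : Path a b) (φ : I → I) (hφc : Continuous φ)
    (hφ0 : φ 0 = 0) (hφ1 : φ 1 = 1) (hco : ∀ t, P₂ t = P (φ t))
    (hP : ∀ t, p (P t) = p x₀) : FHtp p x₀ P₂ P := by
  refine ⟨{ toFun := fun z => P (mixI z.1 (φ z.2) z.2)
            continuous_toFun := ?_
            map_zero_left := ?_
            map_one_left := ?_
            prop' := ?_ }, fun z => hP _⟩
  · exact P.continuous.comp
      (Continuous.mixI continuous_fst (hφc.comp continuous_snd) continuous_snd)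
  · intro s
    simp only [mixI_zero]
    exact (hco s).symm
  · intro s
    simp only [mixI_one]
    rfl
  · intro t s hs
    have : s = 0 ∨ s = 1 := by simpa using hs
    rcases this with rfl | rfl
    · show P (mixI t (φ 0) 0) = P₂ 0
      rw [hφ0, mixI_self, P.source, P₂.source]
    · show P (mixI t (φ 1) 1) = P₂ 1
      rw [hφ1, mixI_self, P.target, P₂.target]

/-- Fiberwise associativity homotopy. -/
theorem assoc {a b c d : E} (P : Path a b) (Q : Path b c) (R : Path c d)
    (hP : ∀ t, p (P t) = p x₀) (hQ : ∀ t, p (Q t) = p x₀) (hR : ∀ t, p (R t) = p x₀) :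
    FHtp p x₀ ((P.trans Q).trans R) (P.trans (Q.trans R)) := by
  refine reparam _ _
    (fun t => ⟨Path.Homotopy.transAssocReparamAux t, Path.Homotopy.transAssocReparamAux_mem_I t⟩)
    (by continuity) (Subtype.ext Path.Homotopy.transAssocReparamAux_zero)
    (Subtype.ext Path.Homotopy.transAssocReparamAux_one) (fun t => ?_)
    (fiber_trans hP (fiber_trans hQ hR))
  rw [Path.Homotopy.trans_assoc_reparam P Q R]
  rfl

/-- Fiberwise homotopy between two boundary paths of a square. -/
theorem square (Q : C(I × I, E)) (hQ : ∀ z, p (Q z) = p x₀)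
    (γ₀ γ₁ : Path ((0, 0) : I × I) ((1, 1) : I × I)) {a b : E} {P₀ P₁ : Path a b}
    (h₀ : ∀ s, P₀ s = Q (γ₀ s)) (h₁ : ∀ s, P₁ s = Q (γ₁ s)) : FHtp p x₀ P₀ P₁ := by
  refine ⟨{ toFun := fun z => Q (mixI z.1 (γ₀ z.2).1 (γ₁ z.2).1, mixI z.1 (γ₀ z.2).2 (γ₁ z.2).2)
            continuous_toFun := ?_
            map_zero_left := ?_
            map_one_left := ?_
            prop' := ?_ }, fun z => hQ _⟩
  · exact Q.continuous.comp (Continuous.prodMk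
      (Continuous.mixI continuous_fst ((γ₀.continuous.comp continuous_snd).fst)
        ((γ₁.continuous.comp continuous_snd).fst))
      (Continuous.mixI continuous_fst ((γ₀.continuous.comp continuous_snd).snd)
        ((γ₁.continuous.comp continuous_snd).snd)))
  · intro s
    simp only [mixI_zero]
    exact (h₀ s).symm
  · intro s
    simp only [mixI_zero, mixI_one]
    exact (h₁ s).symm
  · intro t s hs
    have : s = 0 ∨ s = 1 := by simpa using hs
    rcases this with rfl | rfl
    · show Q (mixI t (γ₀ 0).1 (γ₁ 0).1, mixI t (γ₀ 0).2 (γ₁ 0).2) = P₀ 0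
      rw [γ₀.source, γ₁.source]
      show Q (mixI t 0 0, mixI t 0 0) = P₀ 0
      rw [mixI_self, h₀ 0, γ₀.source]
    · show Q (mixI t (γ₀ 1).1 (γ₁ 1).1, mixI t (γ₀ 1).2 (γ₁ 1).2) = P₀ 1
      rw [γ₀.target, γ₁.target]
      show Q (mixI t 1 1, mixI t 1 1) = P₀ 1
      rw [mixI_self, h₀ 1, γ₀.target]

end FHtp

/-- The identity path on the unit interval. -/
def idI : Path (0 : I) (1 : I) := ⟨⟨_root_.id, continuous_id⟩, rfl, rfl⟩

@[simp] theorem idI_apply (t : I) : idI t = t := rfl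

/-- Left-then-top boundary path of the unit square. -/
noncomputable def leftTop : Path ((0, 0) : I × I) ((1, 1) : I × I) :=
  ((Path.refl (0 : I)).prod idI).trans (idI.prod (Path.refl (1 : I)))

/-- Bottom-then-right boundary path of the unit square. -/
noncomputable def botRight : Path ((0, 0) : I × I) ((1, 1) : I × I) :=
  (idI.prod (Path.refl (0 : I))).trans ((Path.refl (1 : I)).prod idI)

/-- Diagonal path of the unit square. -/
def diagI : Path ((0, 0) : I × I) ((1, 1) : I × I) := idI.prod idI

end NPathNuAux


theorem nPath_nu_homotopic {E B : Type} [TopologicalSpace E] [TopologicalSpace B]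
    [CompactSpace E] [CompactSpace B] [PathConnectedSpace E] [PathConnectedSpace B]
    [T2Space E] [T2Space B] {dE dB : ℕ}
    [ChartedSpace (EuclideanSpace ℝ (Fin dE)) E]
    [ChartedSpace (EuclideanSpace ℝ (Fin dB)) B]
    (p : C(E, B)) (hp : IsHurewiczFibration p)
    (f g : C(E, E)) (hf : ∀ x, p (f x) = p x) (hg : ∀ x, p (g x) = p x)
    (x₀ : E) (ω : Path x₀ (f x₀)) (hω : ∀ t, p (ω t) = p x₀)
    (H : C(E × I, E)) (hK₀ : ∀ x, H (x, 0) = f x) (hK₁ : ∀ x, H (x, 1) = g x)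
    (hKB : ∀ x t, p (H (x, t)) = p x)
    (ν : Path x₀ (g x₀))
    (hνdef : ν = ω.trans (hIterPath H hK₀ hK₁ 1 x₀))
    (n : ℕ) (hn : 1 ≤ n) :
    ∃ K : Path.Homotopy (nPath g ν n)
        ((nPath f ω n).trans (hIterPath H hK₀ hK₁ n x₀)),
      ∀ z, p (K z) = p x₀ := by
  -- main proof
  obtain ⟨K, hK⟩ : FHtp p x₀ (nPath g ν n) ((nPath f ω n).trans (hIterPath H hK₀ hK₁ n x₀)) := by
    have hW1 : ∀ t, p ((hIterPath H hK₀ hK₁ 1 x₀) t) = p x₀ :=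
      fun t => fiber_homotopyIter hKB 1 x₀ t
    have hν : ∀ t, p (ν t) = p x₀ := by
      rw [hνdef]; exact fiber_trans hω hW1
    induction n, hn using Nat.le_induction with
    | base =>
        have e : nPath g ν 1 = ν := rfl
        have e' : nPath f ω 1 = ω := rfl
        rw [e, e', hνdef]
        exact FHtp.refl _ (fiber_trans hω hW1)
    | succ n hn IH =>
        obtain ⟨m, rfl⟩ : ∃ m, n = m + 1 := ⟨n - 1, (Nat.succ_pred_eq_of_pos hn).symm⟩
        set k := m + 1 with hk
        -- abbreviations
        set A : Path x₀ ((⇑f)^[k] x₀) := nPath f ω k with hA'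
        set Fω : Path ((⇑f)^[k] x₀) ((⇑f)^[k] (f x₀)) := ω.map (f.continuous.iterate k) with hFω'
        set νg : Path ((⇑g)^[k] x₀) ((⇑g)^[k] (g x₀)) := ν.map (g.continuous.iterate k) with hνg'
        set Wn : Path ((⇑f)^[k] x₀) ((⇑g)^[k] x₀) := hIterPath H hK₀ hK₁ k x₀ with hWn'
        set Wn1 : Path ((⇑f)^[k + 1] x₀) ((⇑g)^[k + 1] x₀) :=
          hIterPath H hK₀ hK₁ (k + 1) x₀ with hWn1'
        set W1 : Path (f x₀) (g x₀) := hIterPath H hK₀ hK₁ 1 x₀ with hW1'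
        set R : Path ((⇑f)^[k] (g x₀)) ((⇑g)^[k] (g x₀)) := hIterPath H hK₀ hK₁ k (g x₀) with hR'
        set W1f : Path ((⇑f)^[k] (f x₀)) ((⇑f)^[k] (g x₀)) :=
          W1.map (f.continuous.iterate k) with hW1f'
        -- fiberwise facts
        have hWnF : ∀ t, p (Wn t) = p x₀ := fun t => fiber_homotopyIter hKB k x₀ t
        have hWn1F : ∀ t, p (Wn1 t) = p x₀ := fun t => fiber_homotopyIter hKB (k + 1) x₀ t
        have hRF : ∀ t, p (R t) = p x₀ :=
          fun t => (fiber_homotopyIter hKB k (g x₀) t).trans (hg x₀)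
        have hAF : ∀ t, p (A t) = p x₀ := fiber_nPath hf hω k
        have hFωF : ∀ t, p (Fω t) = p x₀ := fiber_map hf hω k
        have hνgF : ∀ t, p (νg t) = p x₀ := fiber_map hg hν k
        have hW1fF : ∀ t, p (W1f t) = p x₀ := fiber_map hf hW1 k
        have hνfF : ∀ t, p ((ν.map (f.continuous.iterate k)) t) = p x₀ := fiber_map hf hν k
        -- the first square: Q1 (s, t) = Hᵏ (ν s, t)
        set Q1 : C(I × I, E) :=
          ⟨fun z => homotopyIter H k (ν z.1, z.2),
            (homotopyIter H k).continuous.comp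
              ((ν.continuous.comp continuous_fst).prodMk continuous_snd)⟩ with hQ1'
        have hQ1F : ∀ z, p (Q1 z) = p x₀ :=
          fun z => (fiber_homotopyIter hKB k (ν z.1) z.2).trans (hν z.1)
        have c3 : FHtp p x₀ (Wn.trans νg) ((ν.map (f.continuous.iterate k)).trans R) := by
          apply FHtp.square Q1 hQ1F leftTop botRight
          · intro s
            rw [Path.trans_apply]
            show _ = Q1 (leftTop s)
            rw [leftTop, Path.trans_apply]
            split_ifs with h
            · show homotopyIter H k (x₀, _) = Q1 _
              simp only [Path.prod_coe, Path.refl_apply, idI_apply]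
              show _ = homotopyIter H k (ν 0, _)
              rw [ν.source]
            · show (⇑g)^[k] (ν _) = Q1 _
              simp only [Path.prod_coe, Path.refl_apply, idI_apply]
              show _ = homotopyIter H k (ν _, 1)
              rw [homotopyIter_one hK₁]
          · intro s
            rw [Path.trans_apply]
            show _ = Q1 (botRight s)
            rw [botRight, Path.trans_apply]
            split_ifs with h
            · show (⇑f)^[k] (ν _) = Q1 _
              simp only [Path.prod_coe, Path.refl_apply, idI_apply]
              show _ = homotopyIter H k (ν _, 0)
              rw [homotopyIter_zero hK₀]
            · show homotopyIter H k (g x₀, _) = Q1 _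
              simp only [Path.prod_coe, Path.refl_apply, idI_apply]
              show _ = homotopyIter H k (ν 1, _)
              rw [ν.target]
        -- the triangle square: Q2 (s, t) = Hᵏ (H (x₀, s), t)
        set Q2 : C(I × I, E) :=
          ⟨fun z => homotopyIter H k (H (x₀, z.1), z.2),
            (homotopyIter H k).continuous.comp
              ((H.continuous.comp (continuous_const.prodMk continuous_fst)).prodMk
                continuous_snd)⟩ with hQ2'
        have hQ2F : ∀ z, p (Q2 z) = p x₀ :=
          fun z => (fiber_homotopyIter hKB k (H (x₀, z.1)) z.2).trans (hKB x₀ z.1)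
        have c6 : FHtp p x₀ (W1f.trans R) Wn1 := by
          apply FHtp.square Q2 hQ2F botRight diagI
          · intro s
            rw [Path.trans_apply]
            show _ = Q2 (botRight s)
            rw [botRight, Path.trans_apply]
            split_ifs with h
            · show (⇑f)^[k] (homotopyIter H 1 (x₀, _)) = Q2 _
              simp only [Path.prod_coe, Path.refl_apply, idI_apply]
              show _ = homotopyIter H k (H (x₀, _), 0)
              rw [homotopyIter_zero hK₀]
              rfl
            · show homotopyIter H k (g x₀, _) = Q2 _
              simp only [Path.prod_coe, Path.refl_apply, idI_apply]
              show _ = homotopyIter H k (H (x₀, 1), _)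
              rw [hK₁ x₀]
          · intro s
            show homotopyIter H (k + 1) (x₀, s) = Q2 (diagI s)
            rw [diagI]
            simp only [Path.prod_coe, idI_apply]
            rfl
        -- assemble
        have eq1 : ν.map (f.continuous.iterate k) = Fω.trans W1f := by
          rw [hFω', hW1f', hνdef, ← Path.map_trans]
          rfl
        have c3' : FHtp p x₀ (Wn.trans νg) ((Fω.trans W1f).trans R) :=
          FHtp.cast rfl (by rw [eq1]) c3
        have c5 : FHtp p x₀ ((Fω.trans W1f).trans R) (Fω.trans (W1f.trans R)) :=
          FHtp.assoc Fω W1f R hFωF hW1fF hRF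
        have c7 : FHtp p x₀ (Fω.trans (W1f.trans R)) (Fω.trans Wn1) :=
          FHtp.hcomp (FHtp.refl Fω hFωF) c6
        have tail : FHtp p x₀ (Wn.trans νg) (Fω.trans Wn1) :=
          c3'.trans (c5.trans c7)
        have c1 : FHtp p x₀ ((nPath g ν k).trans νg) ((A.trans Wn).trans νg) :=
          FHtp.hcomp IH (FHtp.refl νg hνgF)
        have c2 : FHtp p x₀ ((A.trans Wn).trans νg) (A.trans (Wn.trans νg)) :=
          FHtp.assoc A Wn νg hAF hWnF hνgF
        have mid : FHtp p x₀ (A.trans (Wn.trans νg)) (A.trans (Fω.trans Wn1)) :=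
          FHtp.hcomp (FHtp.refl A hAF) tail
        have c8 : FHtp p x₀ (A.trans (Fω.trans Wn1)) ((A.trans Fω).trans Wn1) :=
          (FHtp.assoc A Fω Wn1 hAF hFωF hWn1F).symm
        have total : FHtp p x₀ ((nPath g ν k).trans νg) ((A.trans Fω).trans Wn1) :=
          c1.trans (c2.trans (mid.trans c8))
        have eL : nPath g ν (k + 1) = (nPath g ν k).trans νg := rfl
        have eR : nPath f ω (k + 1) = A.trans Fω := rfl
        rw [eL, eR]
        exact total
  exact ⟨K, hK⟩
end
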